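/- Let H be a complex Hilbert space, let T be a bounded linear operator on H, and let T = U|T| be its canonical polar decomposition. Then the following are equivalent: (i) T is quasinormal, i.e. T(T*T) = (T*T)T; (ii) λT + (1-λ)|T|U = T for all λ ∈ [0,1]; (iii) λT + (1-λ)|T|U = T for some λ ∈ [0,1). -/

import Mathlib

open ContinuousLinearMap
open scoped InnerProductSpace

section Aux

variable {H : Type*} [NormedAddCommGroup H] [InnerProductSpace ℂ H] [CompleteSpace H]

private lemma aux_commute_cfcHom (S a : H →L[ℂ] H) (ha : IsSelfAdjoint a) (h : Commute S a)
    (g : C(spectrum ℝ a, ℝ)) : Commute S (cfcHom ha g) := by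
  induction g using ContinuousMap.induction_on_of_compact with
  | const r =>
      have hc : (ContinuousMap.const (spectrum ℝ a) r) = algebraMap ℝ C(spectrum ℝ a, ℝ) r := rfl
      rw [hc, AlgHomClass.commutes]
      exact Algebra.commute_algebraMap_right r S
  | id => rw [cfcHom_id ha]; exact h
  | star_id => rw [star_trivial, cfcHom_id ha]; exact h
  | add f g hf hg => rw [map_add]; exact hf.add_right hg
  | mul f g hf hg => rw [map_mul]; exact hf.mul_right hg
  | frequently f hf =>
      have hcfc : Continuous (fun g : C(spectrum ℝ a, ℝ) => cfcHom ha g) :=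
        cfcHom_continuous ha
      have hcont : Continuous
          (fun g : C(spectrum ℝ a, ℝ) => S * cfcHom ha g - cfcHom ha g * S) :=
        (continuous_const.mul hcfc).sub (hcfc.mul continuous_const)
      have hcl : IsClosed {g : C(spectrum ℝ a, ℝ) | Commute S (cfcHom ha g)} := by
        have hset : {g : C(spectrum ℝ a, ℝ) | Commute S (cfcHom ha g)} =
            (fun g : C(spectrum ℝ a, ℝ) => S * cfcHom ha g - cfcHom ha g * S) ⁻¹' {0} := by
          ext g
          simp [Commute, SemiconjBy, sub_eq_zero]
        rw [hset]
        exact isClosed_singleton.preimage hcont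
      exact hcl.closure_subset (mem_closure_iff_frequently.mpr hf)

private lemma aux_commute_cfc (S a : H →L[ℂ] H) (ha : IsSelfAdjoint a) (h : Commute S a)
    (f : ℝ → ℝ) : Commute S (cfc f a) := by
  by_cases hf : ContinuousOn f (spectrum ℝ a)
  · rw [cfc_apply f a ha hf]
    exact aux_commute_cfcHom S a ha h _
  · rw [cfc_apply_of_not_continuousOn a hf]
    exact Commute.zero_right S

private lemma aux_commute_of_commute_sq (S R : H →L[ℂ] H) (hR : R.IsPositive)
    (h : Commute S (R * R)) : Commute S R := by
  have h0 : (0 : H →L[ℂ] H) ≤ R := (nonneg_iff_isPositive R).mpr hR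
  have hsa : IsSelfAdjoint (R * R) := by
    rw [IsSelfAdjoint, star_mul, hR.isSelfAdjoint.star_eq]
  have key : cfc Real.sqrt (R * R) = R := by
    rw [← pow_two, ← cfc_comp_pow Real.sqrt 2 R (by fun_prop) hR.isSelfAdjoint]
    calc cfc (fun x => Real.sqrt (x ^ 2)) R
        = cfc (id : ℝ → ℝ) R := cfc_congr fun x hx => by
          simpa using Real.sqrt_sq (spectrum_nonneg_of_nonneg h0 hx)
      _ = R := cfc_id ℝ R hR.isSelfAdjoint
  rw [← key]
  exact aux_commute_cfc S (R * R) hsa h Real.sqrt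

end Aux

/-- The λ-mean transform equals `T` iff `T` is quasinormal. -/
theorem stmt0 {H : Type*} [NormedAddCommGroup H] [InnerProductSpace ℂ H] [CompleteSpace H]
    (T U R : H →L[ℂ] H)
    (hRpos : R.IsPositive) (hRsq : R * R = adjoint T * T)
    (hUpar : U * adjoint U * U = U)
    (hker : LinearMap.ker (U : H →ₗ[ℂ] H) = LinearMap.ker (T : H →ₗ[ℂ] H))
    (hTUR : T = U * R) :
    List.TFAE
      [T * (adjoint T * T) = (adjoint T * T) * T,
       ∀ l : ℝ, l ∈ Set.Icc (0 : ℝ) 1 → (l : ℂ) • T + ((1 : ℂ) - (l : ℂ)) • (R * U) = T,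
       ∃ l : ℝ, l ∈ Set.Ico (0 : ℝ) 1 ∧ (l : ℂ) • T + ((1 : ℂ) - (l : ℂ)) • (R * U) = T] := by
  have hRadj : ContinuousLinearMap.adjoint R = R := hRpos.isSelfAdjoint
  -- norms agree: ‖R x‖ = ‖T x‖
  have hnorm : ∀ x : H, ‖R x‖ = ‖T x‖ := by
    intro x
    have h1 : (⟪R x, R x⟫_ℂ) = ⟪T x, T x⟫_ℂ := by
      calc ⟪R x, R x⟫_ℂ = ⟪x, ContinuousLinearMap.adjoint R (R x)⟫_ℂ :=
            (ContinuousLinearMap.adjoint_inner_right R x (R x)).symm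
        _ = ⟪x, (R * R) x⟫_ℂ := by rw [hRadj]; rfl
        _ = ⟪x, (ContinuousLinearMap.adjoint T * T) x⟫_ℂ := by rw [hRsq]
        _ = ⟪x, ContinuousLinearMap.adjoint T (T x)⟫_ℂ := rfl
        _ = ⟪T x, T x⟫_ℂ := ContinuousLinearMap.adjoint_inner_right T x (T x)
    have h3 : (‖R x‖ : ℝ) ^ 2 = ‖T x‖ ^ 2 := by
      have hh := congrArg (fun z => RCLike.re (K := ℂ) z) h1
      change RCLike.re ⟪R x, R x⟫_ℂ = RCLike.re ⟪T x, T x⟫_ℂ at hh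
      rw [inner_self_eq_norm_sq (𝕜 := ℂ), inner_self_eq_norm_sq (𝕜 := ℂ)] at hh
      exact hh
    nlinarith [norm_nonneg (R x), norm_nonneg (T x)]
  have hkerR : ∀ x : H, T x = 0 → R x = 0 := fun x hx => by
    have := hnorm x
    rw [hx, norm_zero, norm_eq_zero] at this
    exact this
  -- the central equivalence
  have hiff : T * (adjoint T * T) = (adjoint T * T) * T ↔ R * U = T := by
    constructor
    · intro hqn
      have hcomm2 : Commute T (R * R) := by rw [hRsq]; exact hqn
      have hcommTR : Commute T R := aux_commute_of_commute_sq T R hRpos hcomm2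
      set D := U * R - R * U with hD
      have hDR : D * R = 0 := by
        have h1 : (U * R) * R = (R * U) * R := by
          calc (U * R) * R = T * R := by rw [hTUR]
            _ = R * T := hcommTR
            _ = (R * U) * R := by rw [hTUR, mul_assoc]
        rw [hD, sub_mul, h1, sub_self]
      have hkerle : LinearMap.ker (R : H →ₗ[ℂ] H) ≤ LinearMap.ker (D : H →ₗ[ℂ] H) := by
        intro x hx
        have hxR : R x = 0 := hx
        have hxT : T x = 0 := by
          have := hnorm x
          rw [hxR, norm_zero, eq_comm, norm_eq_zero] at this
          exact this
        have hxU : U x = 0 := by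
          have hmem : x ∈ LinearMap.ker (U : H →ₗ[ℂ] H) := by rw [hker]; exact hxT
          exact hmem
        show D x = 0
        have : D x = U (R x) - R (U x) := rfl
        rw [this, hxR, hxU, map_zero, map_zero, sub_self]
      have hrangele : LinearMap.range (R : H →ₗ[ℂ] H) ≤ LinearMap.ker (D : H →ₗ[ℂ] H) := by
        rintro _ ⟨x, rfl⟩
        show D (R x) = 0
        have : D (R x) = (D * R) x := rfl
        rw [this, hDR]; rfl
      have hclosed : IsClosed (LinearMap.ker (D : H →ₗ[ℂ] H) : Set H) := ContinuousLinearMap.isClosed_ker D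
      have hclosle : (LinearMap.range (R : H →ₗ[ℂ] H)).topologicalClosure ≤ LinearMap.ker (D : H →ₗ[ℂ] H) :=
        Submodule.topologicalClosure_minimal _ hrangele hclosed
      have horthle : (LinearMap.ker (R : H →ₗ[ℂ] H))ᗮ ≤ LinearMap.ker (D : H →ₗ[ℂ] H) := by
        have h1 : (LinearMap.range (R : H →ₗ[ℂ] H))ᗮ ≤ LinearMap.ker (R : H →ₗ[ℂ] H) := by
          intro x hx
          have h2 : ⟪R (R x), x⟫_ℂ = 0 := hx (R (R x)) ⟨R x, rfl⟩
          have h3 : ⟪R x, R x⟫_ℂ = 0 := by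
            have h4 := ContinuousLinearMap.adjoint_inner_left R x (R x)
            rw [hRadj] at h4
            rw [← h4]
            exact h2
          exact LinearMap.mem_ker.mpr (inner_self_eq_zero.mp h3)
        have h2 : (LinearMap.ker (R : H →ₗ[ℂ] H))ᗮ ≤ ((LinearMap.range (R : H →ₗ[ℂ] H))ᗮ)ᗮ :=
          Submodule.orthogonal_le h1
        rw [Submodule.orthogonal_orthogonal_eq_closure] at h2
        exact le_trans h2 hclosle
      have hDzero : D = 0 := by
        ext x
        obtain ⟨y, hy, z, hz, rfl⟩ := (LinearMap.ker (R : H →ₗ[ℂ] H)).exists_add_mem_mem_orthogonal x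
        have hy0 : D y = 0 := hkerle hy
        have hz0 : D z = 0 := horthle hz
        show D (y + z) = 0
        rw [map_add, hy0, hz0, add_zero]
      have : U * R = R * U := by
        have := sub_eq_zero.mp hDzero
        exact this
      rw [← this, ← hTUR]
    · intro hRU
      have hUR : U * R = R * U := by rw [hRU, ← hTUR]
      have hTR : Commute T R := by
        show T * R = R * T
        calc T * R = (U * R) * R := by rw [hTUR]
          _ = (R * U) * R := by rw [hUR]
          _ = R * ((U * R)) := by rw [mul_assoc]
          _ = R * T := by rw [← hTUR]
      have : Commute T (R * R) := hTR.mul_right hTR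
      rw [hRsq] at this
      exact this
  tfae_have 1 → 2 := by
    intro h1 l _
    rw [hiff.mp h1, ← add_smul]
    have : (l : ℂ) + (1 - l) = 1 := by ring
    rw [this, one_smul]
  tfae_have 2 → 3 := by
    intro h2
    exact ⟨0, ⟨le_refl 0, zero_lt_one⟩, h2 0 ⟨le_refl 0, zero_le_one⟩⟩
  tfae_have 3 → 1 := by
    rintro ⟨l, ⟨_, hl1⟩, heq⟩
    have hne : ((1 : ℂ) - (l : ℂ)) ≠ 0 := by
      intro hc
      have : (l : ℂ) = 1 := by linear_combination -hc
      have : (l : ℝ) = 1 := by exact_mod_cast this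
      linarith
    have hRU : R * U = T := by
      have h2 : (l : ℂ) • T + ((1 : ℂ) - (l : ℂ)) • T = T := by
        rw [← add_smul]
        have : (l : ℂ) + (1 - l) = 1 := by ring
        rw [this, one_smul]
      have h4 : ((1 : ℂ) - (l : ℂ)) • (R * U - T) = 0 := by
        calc ((1 : ℂ) - (l : ℂ)) • (R * U - T)
            = ((l : ℂ) • T + ((1 : ℂ) - (l : ℂ)) • (R * U)) -
              ((l : ℂ) • T + ((1 : ℂ) - (l : ℂ)) • T) := by
              rw [smul_sub]; abel
          _ = 0 := by rw [heq, h2, sub_self]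
      rcases smul_eq_zero.mp h4 with hc | hc
      · exact absurd hc hne
      · exact sub_eq_zero.mp hc
    exact hiff.mpr hRU
  tfae_finish
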